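/- Let p be a prime and x, y, z ∈ ℚ_p. Set Y = [[x,y],[y,z]], n = [[1,0,x,y],[0,1,y,z],[0,0,1,0],[0,0,0,1]] and σ = s₂s₁s₂. Then σ·n ∈ P_S(ℚ_p)·B(p) if and only if min{v_p(x), v_p(y), v_p(z)} > v_p(xz − y²) (with the convention v_p(0) = +∞, this forces xz − y² ≠ 0, i.e. Y invertible). Moreover, in that case, whenever σ·n = q·γ with q ∈ P_S(ℚ_p) and γ ∈ B(p), one has m₂(q) ∈ [[0,1],[1,0]]·Y⁻¹·Γ₀(p). -/

import Mathlib

open Matrix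

/-- The standard symplectic similitude matrix `J`. -/
noncomputable def J4 (p : ℕ) [Fact p.Prime] : Matrix (Fin 4) (Fin 4) ℚ_[p] :=
  !![0, 0, 1, 0; 0, 0, 0, 1; -1, 0, 0, 0; 0, -1, 0, 0]

/-- `GSp₄(ℚ_p)`: invertible 4×4 matrices `g` with `gᵀ·J·g = μ·J` for some `μ ≠ 0`. -/
def GSp4 (p : ℕ) [Fact p.Prime] : Set (Matrix (Fin 4) (Fin 4) ℚ_[p]) :=
  {g | g.det ≠ 0 ∧ ∃ μ : ℚ_[p], μ ≠ 0 ∧ gᵀ * J4 p * g = μ • J4 p}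

/-- The congruence subgroup `B(p)` of `GSp₄(ℤ_p)`: all entries in `ℤ_p`, similitude factor a
unit, and the entries at positions (2,1), (3,1), (4,1), (3,2), (4,2), (3,4) in `pℤ_p`. -/
def Bp (p : ℕ) [Fact p.Prime] : Set (Matrix (Fin 4) (Fin 4) ℚ_[p]) :=
  {g | (∀ i j, ‖g i j‖ ≤ 1) ∧ (∃ μ : ℚ_[p], ‖μ‖ = 1 ∧ gᵀ * J4 p * g = μ • J4 p) ∧
    ‖g 1 0‖ ≤ (p : ℝ)⁻¹ ∧ ‖g 2 0‖ ≤ (p : ℝ)⁻¹ ∧ ‖g 3 0‖ ≤ (p : ℝ)⁻¹ ∧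
    ‖g 2 1‖ ≤ (p : ℝ)⁻¹ ∧ ‖g 3 1‖ ≤ (p : ℝ)⁻¹ ∧ ‖g 2 3‖ ≤ (p : ℝ)⁻¹}

/-- The Siegel parabolic `P_S(ℚ_p)`: entries at positions (3,1), (3,2), (4,1), (4,2)
vanish. -/
def PS (p : ℕ) [Fact p.Prime] : Set (Matrix (Fin 4) (Fin 4) ℚ_[p]) :=
  {g | g ∈ GSp4 p ∧ g 2 0 = 0 ∧ g 2 1 = 0 ∧ g 3 0 = 0 ∧ g 3 1 = 0}

/-- The upper-left `GL₂`-block `m₂(q)` of an element of the Siegel parabolic. -/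
def m2S (p : ℕ) [Fact p.Prime] (q : Matrix (Fin 4) (Fin 4) ℚ_[p]) :
    Matrix (Fin 2) (Fin 2) ℚ_[p] :=
  !![q 0 0, q 0 1; q 1 0, q 1 1]

/-- `Γ₀(p) = {γ ∈ GL₂(ℤ_p) : γ₂₁ ∈ pℤ_p}`. -/
def Gamma0 (p : ℕ) [Fact p.Prime] : Set (Matrix (Fin 2) (Fin 2) ℚ_[p]) :=
  {γ | (∀ i j, ‖γ i j‖ ≤ 1) ∧ ‖γ.det‖ = 1 ∧ ‖γ 1 0‖ ≤ (p : ℝ)⁻¹}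

/-- The Weyl element `s₁`. -/
noncomputable def s1 (p : ℕ) [Fact p.Prime] : Matrix (Fin 4) (Fin 4) ℚ_[p] :=
  !![0, 1, 0, 0; 1, 0, 0, 0; 0, 0, 0, 1; 0, 0, 1, 0]

/-- The Weyl element `s₂`. -/
noncomputable def s2 (p : ℕ) [Fact p.Prime] : Matrix (Fin 4) (Fin 4) ℚ_[p] :=
  !![1, 0, 0, 0; 0, 0, 0, 1; 0, 0, 1, 0; 0, -1, 0, 0]

/-- The unipotent matrix `n` attached to `(x, y, z)` (Siegel setting). -/
noncomputable def nS (p : ℕ) [Fact p.Prime] (x y z : ℚ_[p]) : Matrix (Fin 4) (Fin 4) ℚ_[p] :=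
  !![1, 0, x, y; 0, 1, y, z; 0, 0, 1, 0; 0, 0, 0, 1]

set_option maxHeartbeats 1000000 in
private theorem mul4lit {R : Type*} [CommRing R] (a11 a12 a13 a14 a21 a22 a23 a24 a31 a32 a33 a34 a41 a42 a43 a44 b11 b12 b13 b14 b21 b22 b23 b24 b31 b32 b33 b34 b41 b42 b43 b44 : R) :
    !![a11, a12, a13, a14; a21, a22, a23, a24; a31, a32, a33, a34; a41, a42, a43, a44] * !![b11, b12, b13, b14; b21, b22, b23, b24; b31, b32, b33, b34; b41, b42, b43, b44] =
      !![a11*b11 + a12*b21 + a13*b31 + a14*b41, a11*b12 + a12*b22 + a13*b32 + a14*b42, a11*b13 + a12*b23 + a13*b33 + a14*b43, a11*b14 + a12*b24 + a13*b34 + a14*b44; a21*b11 + a22*b21 + a23*b31 + a24*b41, a21*b12 + a22*b22 + a23*b32 + a24*b42, a21*b13 + a22*b23 + a23*b33 + a24*b43, a21*b14 + a22*b24 + a23*b34 + a24*b44; a31*b11 + a32*b21 + a33*b31 + a34*b41, a31*b12 + a32*b22 + a33*b32 + a34*b42, a31*b13 + a32*b23 + a33*b33 + a34*b43, a31*b14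 + a32*b24 + a33*b34 + a34*b44; a41*b11 + a42*b21 + a43*b31 + a44*b41, a41*b12 + a42*b22 + a43*b32 + a44*b42, a41*b13 + a42*b23 + a43*b33 + a44*b43, a41*b14 + a42*b24 + a43*b34 + a44*b44] := by
  ext i j
  fin_cases i <;> fin_cases j <;> simp [Matrix.mul_apply, Fin.sum_univ_succ, add_assoc]

private theorem transpose4lit {R : Type*} [CommRing R] (a11 a12 a13 a14 a21 a22 a23 a24 a31 a32 a33 a34 a41 a42 a43 a44 : R) :
    (!![a11, a12, a13, a14; a21, a22, a23, a24; a31, a32, a33, a34; a41, a42, a43, a44])ᵀ = !![a11, a21, a31, a41; a12, a22, a32, a42; a13, a23, a33, a43; a14, a24, a34, a44] := by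
  ext i j
  fin_cases i <;> fin_cases j <;> rfl

private lemma det4lit {R : Type*} [CommRing R] (a b c d e f g h i j k l m n o q : R) :
    Matrix.det !![a,b,c,d;e,f,g,h;i,j,k,l;m,n,o,q] =
      a*f*k*q - a*f*l*o - a*g*j*q + a*g*l*n + a*h*j*o - a*h*k*n
      - b*e*k*q + b*e*l*o + b*g*i*q - b*g*l*m - b*h*i*o + b*h*k*m
      + c*e*j*q - c*e*l*n - c*f*i*q + c*f*l*m + c*h*i*n - c*h*j*m
      - d*e*j*o + d*e*k*n + d*f*i*o - d*f*k*m - d*g*i*n + d*g*j*m := by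
  rw [Matrix.det_succ_row_zero]
  simp [Fin.sum_univ_succ, Matrix.det_fin_three, Fin.succAbove]
  ring

private lemma eta4 {R : Type*} [CommRing R] (g : Matrix (Fin 4) (Fin 4) R) :
    g = !![g 0 0, g 0 1, g 0 2, g 0 3; g 1 0, g 1 1, g 1 2, g 1 3;
           g 2 0, g 2 1, g 2 2, g 2 3; g 3 0, g 3 1, g 3 2, g 3 3] := by
  ext i j
  fin_cases i <;> fin_cases j <;> rfl

private lemma det4g {R : Type*} [CommRing R] (g : Matrix (Fin 4) (Fin 4) R) :
    g.det =
      g 0 0*g 1 1*g 2 2*g 3 3 - g 0 0*g 1 1*g 2 3*g 3 2 - g 0 0*g 1 2*g 2 1*g 3 3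
      + g 0 0*g 1 2*g 2 3*g 3 1 + g 0 0*g 1 3*g 2 1*g 3 2 - g 0 0*g 1 3*g 2 2*g 3 1
      - g 0 1*g 1 0*g 2 2*g 3 3 + g 0 1*g 1 0*g 2 3*g 3 2 + g 0 1*g 1 2*g 2 0*g 3 3
      - g 0 1*g 1 2*g 2 3*g 3 0 - g 0 1*g 1 3*g 2 0*g 3 2 + g 0 1*g 1 3*g 2 2*g 3 0
      + g 0 2*g 1 0*g 2 1*g 3 3 - g 0 2*g 1 0*g 2 3*g 3 1 - g 0 2*g 1 1*g 2 0*g 3 3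
      + g 0 2*g 1 1*g 2 3*g 3 0 + g 0 2*g 1 3*g 2 0*g 3 1 - g 0 2*g 1 3*g 2 1*g 3 0
      - g 0 3*g 1 0*g 2 1*g 3 2 + g 0 3*g 1 0*g 2 2*g 3 1 + g 0 3*g 1 1*g 2 0*g 3 2
      - g 0 3*g 1 1*g 2 2*g 3 0 - g 0 3*g 1 2*g 2 0*g 3 1 + g 0 3*g 1 2*g 2 1*g 3 0 := by
  conv_lhs => rw [eta4 g]
  rw [det4lit]

private lemma sigma_n (p : ℕ) [Fact p.Prime] (x y z : ℚ_[p]) :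
    s2 p * s1 p * s2 p * nS p x y z =
      !![0,0,0,1; 0,0,1,0; 0,-1,-y,-z; -1,0,-x,-y] := by
  rw [s2, s1, nS, mul4lit, mul4lit, mul4lit]
  norm_num

private lemma detJ4 (p : ℕ) [Fact p.Prime] : (J4 p).det = 1 := by
  rw [J4, det4lit]; norm_num

private lemma nadd {p : ℕ} [Fact p.Prime] {u v : ℚ_[p]} {c : ℝ} (hu : ‖u‖ ≤ c) (hv : ‖v‖ ≤ c) :
    ‖u + v‖ ≤ c :=
  le_trans (Padic.nonarchimedean u v) (max_le hu hv)

private lemma nsub {p : ℕ} [Fact p.Prime] {u v : ℚ_[p]} {c : ℝ} (hu : ‖u‖ ≤ c) (hv : ‖v‖ ≤ c) :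
    ‖u - v‖ ≤ c := by
  rw [sub_eq_add_neg]; exact nadd hu (by rwa [norm_neg])

private lemma nmul {p : ℕ} [Fact p.Prime] {u v : ℚ_[p]} {a b : ℝ} (hu : ‖u‖ ≤ a) (hv : ‖v‖ ≤ b) :
    ‖u * v‖ ≤ a * b := by
  rw [norm_mul]
  exact mul_le_mul hu hv (norm_nonneg _) (le_trans (norm_nonneg _) hu)

private lemma nmul1 {p : ℕ} [Fact p.Prime] {u v : ℚ_[p]} {b : ℝ} (hu : ‖u‖ ≤ 1) (hv : ‖v‖ ≤ b) :
    ‖u * v‖ ≤ b := by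
  have := nmul hu hv; rwa [one_mul] at this

private lemma val_lt_iff (p : ℕ) [Fact p.Prime] (Δ t : ℚ_[p]) (hΔ : Δ ≠ 0) :
    Padic.addValuation Δ < Padic.addValuation t ↔ ‖t‖ ≤ (p : ℝ)⁻¹ * ‖Δ‖ := by
  have hp1 : (1 : ℝ) < (p : ℝ) := by exact_mod_cast (Fact.out : p.Prime).one_lt
  have hp0 : (0 : ℝ) < (p : ℝ) := by positivity
  by_cases ht : t = 0
  · subst ht
    simp only [Padic.addValuation.apply hΔ, norm_zero]
    constructor
    · intro _; positivity
    · intro _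
      rw [show Padic.addValuation (0 : ℚ_[p]) = ⊤ from AddValuation.map_zero _]
      exact WithTop.coe_lt_top _
  · rw [Padic.addValuation.apply hΔ, Padic.addValuation.apply ht, WithTop.coe_lt_coe,
      Padic.norm_eq_zpow_neg_valuation ht, Padic.norm_eq_zpow_neg_valuation hΔ,
      show ((p : ℝ))⁻¹ = (p : ℝ) ^ (-1 : ℤ) by simp,
      ← zpow_add₀ (ne_of_gt hp0),
      zpow_le_zpow_iff_right₀ hp1]
    omega

set_option maxHeartbeats 2000000 in
private lemma suffice (p : ℕ) [Fact p.Prime] (x y z : ℚ_[p])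
    (hΔ : x * z - y ^ 2 ≠ 0)
    (hx : ‖x‖ ≤ (p : ℝ)⁻¹ * ‖x * z - y ^ 2‖)
    (hy : ‖y‖ ≤ (p : ℝ)⁻¹ * ‖x * z - y ^ 2‖)
    (hz : ‖z‖ ≤ (p : ℝ)⁻¹ * ‖x * z - y ^ 2‖) :
    ∃ q ∈ PS p, ∃ γ ∈ Bp p, s2 p * s1 p * s2 p * nS p x y z = q * γ := by
  set Δ : ℚ_[p] := x * z - y ^ 2 with hΔdef
  have hp1 : (1 : ℝ) < (p : ℝ) := by exact_mod_cast (Fact.out : p.Prime).one_lt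
  have hpinv1 : (p : ℝ)⁻¹ ≤ 1 := by
    rw [inv_le_one_iff₀]; right; linarith
  have hΔn : 0 < ‖Δ‖ := norm_pos_iff.mpr hΔ
  have hdiv : ∀ t : ℚ_[p], ‖t‖ ≤ (p : ℝ)⁻¹ * ‖Δ‖ → ‖t‖ * ‖Δ‖⁻¹ ≤ (p : ℝ)⁻¹ := by
    intro t ht
    rw [mul_inv_le_iff₀ hΔn]
    exact ht
  have hdiv' : ∀ t : ℚ_[p], ‖t‖ * ‖Δ‖⁻¹ ≤ (p : ℝ)⁻¹ → ‖t * Δ⁻¹‖ ≤ (p : ℝ)⁻¹ := by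
    intro t ht
    rwa [norm_mul, norm_inv]
  have hxd := hdiv x hx
  have hyd := hdiv y hy
  have hzd := hdiv z hz
  refine ⟨!![y*Δ⁻¹, -(x*Δ⁻¹), 0, 1; -(z*Δ⁻¹), y*Δ⁻¹, 1, 0; 0,0,-y,-z; 0,0,-x,-y], ?_,
         !![1,0,0,0; 0,1,0,0; z*Δ⁻¹, -(y*Δ⁻¹),1,0; -(y*Δ⁻¹), x*Δ⁻¹,0,1], ?_, ?_⟩
  · -- q ∈ PS p
    have hqJ : (!![y*Δ⁻¹, -(x*Δ⁻¹), 0, 1; -(z*Δ⁻¹), y*Δ⁻¹, 1, 0; 0,0,-y,-z; 0,0,-x,-y])ᵀ * J4 p *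
        !![y*Δ⁻¹, -(x*Δ⁻¹), 0, 1; -(z*Δ⁻¹), y*Δ⁻¹, 1, 0; 0,0,-y,-z; 0,0,-x,-y]
        = (1 : ℚ_[p]) • J4 p := by
      rw [transpose4lit, J4, mul4lit, mul4lit, one_smul]
      ext i j
      fin_cases i <;> fin_cases j <;>
        (simp [Matrix.vecHead, Matrix.vecTail]; try (field_simp; ring))
    refine ⟨⟨?_, 1, one_ne_zero, hqJ⟩, by simp [Matrix.vecHead, Matrix.vecTail],
      by simp [Matrix.vecHead, Matrix.vecTail], by simp [Matrix.vecHead, Matrix.vecTail],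
      by simp [Matrix.vecHead, Matrix.vecTail]⟩
    · intro h0
      have hd := congrArg Matrix.det hqJ
      rw [Matrix.det_mul, Matrix.det_mul, Matrix.det_transpose, one_smul, h0] at hd
      rw [detJ4] at hd
      norm_num at hd
  · -- γ ∈ Bp p
    have hγJ : (!![(1:ℚ_[p]),0,0,0; 0,1,0,0; z*Δ⁻¹, -(y*Δ⁻¹),1,0; -(y*Δ⁻¹), x*Δ⁻¹,0,1])ᵀ * J4 p *
        !![1,0,0,0; 0,1,0,0; z*Δ⁻¹, -(y*Δ⁻¹),1,0; -(y*Δ⁻¹), x*Δ⁻¹,0,1] = (1 : ℚ_[p]) • J4 p := by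
      rw [transpose4lit, J4, mul4lit, mul4lit, one_smul]
      ext i j
      fin_cases i <;> fin_cases j <;>
        (simp [Matrix.vecHead, Matrix.vecTail]; try (field_simp; ring))
    refine ⟨?_, ⟨1, by norm_num, hγJ⟩, ?_, ?_, ?_, ?_, ?_, ?_⟩
    · intro i j
      fin_cases i <;> fin_cases j <;> simp [Matrix.vecHead, Matrix.vecTail] <;>
        first
          | exact le_trans hxd hpinv1
          | exact le_trans hyd hpinv1
          | exact le_trans hzd hpinv1
          | positivity
    · simp [Matrix.vecHead, Matrix.vecTail]
      try positivity
    · simpa [Matrix.vecHead, Matrix.vecTail] using hzd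
    · simpa [Matrix.vecHead, Matrix.vecTail] using hyd
    · simpa [Matrix.vecHead, Matrix.vecTail] using hyd
    · simpa [Matrix.vecHead, Matrix.vecTail] using hxd
    · simp [Matrix.vecHead, Matrix.vecTail]
      try positivity
  · -- factorization
    rw [sigma_n, mul4lit]
    ext i j
    fin_cases i <;> fin_cases j <;>
      (simp [Matrix.vecHead, Matrix.vecTail]; try (field_simp; ring))

private lemma nmul1' {p : ℕ} [Fact p.Prime] {u v : ℚ_[p]} {b : ℝ} (hu : ‖u‖ ≤ b) (hv : ‖v‖ ≤ 1) :
    ‖u * v‖ ≤ b := by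
  rw [mul_comm]; exact nmul1 hv hu

set_option maxHeartbeats 1000000 in
private lemma twoblocks (p : ℕ) [Fact p.Prime] (x y z : ℚ_[p])
    (A B D a b c d : Matrix (Fin 2) (Fin 2) ℚ_[p])
    (hbint : ∀ i j, ‖b i j‖ ≤ 1) (hdint : ∀ i j, ‖d i j‖ ≤ 1)
    (hcint : ∀ i j, ‖c i j‖ ≤ (p : ℝ)⁻¹) (ha10 : ‖a 1 0‖ ≤ (p : ℝ)⁻¹)
    (haint : ∀ i j, ‖a i j‖ ≤ 1)
    (hdeta : ‖a.det‖ = 1) (hdetd : ‖d.det‖ = 1)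
    (h1 : A * a + B * c = 0) (h2 : A * b + B * d = !![0,1;1,0])
    (h3 : D * c = !![0,-1;-1,0]) (h4 : D * d = !![-y,-z;-x,-y]) :
    (x * z - y ^ 2 ≠ 0) ∧
    ‖x‖ ≤ (p : ℝ)⁻¹ * ‖x * z - y ^ 2‖ ∧ ‖y‖ ≤ (p : ℝ)⁻¹ * ‖x * z - y ^ 2‖ ∧
    ‖z‖ ≤ (p : ℝ)⁻¹ * ‖x * z - y ^ 2‖ ∧
    ∃ γ' ∈ Gamma0 p, A = !![0, 1; 1, 0] * (!![x, y; y, z])⁻¹ * γ' := by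
  have hp1 : (1 : ℝ) < (p : ℝ) := by exact_mod_cast (Fact.out : p.Prime).one_lt
  have hpinv1 : (p : ℝ)⁻¹ < 1 := by
    rw [inv_lt_one_iff₀]; right; exact hp1
  set Ym : Matrix (Fin 2) (Fin 2) ℚ_[p] := !![x, y; y, z] with hYm
  -- c and D invertible
  have hdc : D.det * c.det = -1 := by
    have := congrArg Matrix.det h3
    rw [Matrix.det_mul, Matrix.det_fin_two_of] at this
    rw [this]; ring
  have hcdet : c.det ≠ 0 := by
    intro h0; rw [h0, mul_zero] at hdc; norm_num at hdc
  have hDdet : D.det ≠ 0 := by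
    intro h0; rw [h0, zero_mul] at hdc; norm_num at hdc
  have hcu : IsUnit c.det := isUnit_iff_ne_zero.mpr hcdet
  have hddet : d.det ≠ 0 := by
    intro h0; rw [h0] at hdetd; simp at hdetd
  have hdu : IsUnit d.det := isUnit_iff_ne_zero.mpr hddet
  -- d = c * Ym
  have hd_eq : d = c * Ym := by
    haveI := Matrix.invertibleOfIsUnitDet D (isUnit_iff_ne_zero.mpr hDdet)
    apply Matrix.mul_right_injective_of_invertible D
    show D * d = D * (c * Ym)
    rw [h4, ← Matrix.mul_assoc, h3, hYm]
    rw [Matrix.mul_fin_two]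
    norm_num
  -- Ym invertible
  have hYdet_rel : d.det = c.det * Ym.det := by
    rw [hd_eq, Matrix.det_mul]
  have hYdet : Ym.det ≠ 0 := by
    intro h0; rw [h0, mul_zero] at hYdet_rel; exact hddet hYdet_rel
  have hYu : IsUnit Ym.det := isUnit_iff_ne_zero.mpr hYdet
  have hΔeq : Ym.det = x * z - y ^ 2 := by rw [hYm, Matrix.det_fin_two_of]; ring
  have hΔ : x * z - y ^ 2 ≠ 0 := hΔeq ▸ hYdet
  -- Ym⁻¹ = d⁻¹ * c
  have hYinv_eq : Ym⁻¹ = d⁻¹ * c := by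
    have hcY : c⁻¹ * d = Ym := by
      rw [hd_eq, ← Matrix.mul_assoc, Matrix.nonsing_inv_mul c hcu, Matrix.one_mul]
    rw [← hcY, Matrix.mul_inv_rev, Matrix.nonsing_inv_nonsing_inv c hcu]
  -- entries of d⁻¹
  have hdinv_det : ‖(d.det)⁻¹‖ = 1 := by rw [norm_inv, hdetd, inv_one]
  have hdi : d⁻¹ = (d.det)⁻¹ • !![d 1 1, -(d 0 1); -(d 1 0), d 0 0] := by
    rw [Matrix.inv_def, Matrix.adjugate_fin_two, Ring.inverse_eq_inv']
  have hdinv : ∀ i j, ‖d⁻¹ i j‖ ≤ 1 := by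
    have k00 : d⁻¹ 0 0 = d.det⁻¹ * d 1 1 := by rw [hdi]; simp
    have k01 : d⁻¹ 0 1 = d.det⁻¹ * -(d 0 1) := by rw [hdi]; simp
    have k10 : d⁻¹ 1 0 = d.det⁻¹ * -(d 1 0) := by rw [hdi]; simp
    have k11 : d⁻¹ 1 1 = d.det⁻¹ * d 0 0 := by rw [hdi]; simp
    intro i j
    fin_cases i <;> fin_cases j
    · rw [show ((⟨0,by norm_num⟩ : Fin 2)) = 0 from rfl] at *
      rw [k00]; exact nmul1 (le_of_eq hdinv_det) (hdint _ _)
    · rw [show ((⟨0,by norm_num⟩ : Fin 2)) = 0 from rfl, show ((⟨1,by norm_num⟩ : Fin 2)) = 1 from rfl]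
      rw [k01, mul_neg, norm_neg]; exact nmul1 (le_of_eq hdinv_det) (hdint _ _)
    · rw [show ((⟨0,by norm_num⟩ : Fin 2)) = 0 from rfl, show ((⟨1,by norm_num⟩ : Fin 2)) = 1 from rfl]
      rw [k10, mul_neg, norm_neg]; exact nmul1 (le_of_eq hdinv_det) (hdint _ _)
    · rw [show ((⟨1,by norm_num⟩ : Fin 2)) = 1 from rfl]
      rw [k11]; exact nmul1 (le_of_eq hdinv_det) (hdint _ _)
  -- entries of Ym⁻¹ are small
  have hYb : ∀ i j, ‖Ym⁻¹ i j‖ ≤ (p : ℝ)⁻¹ := by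
    intro i j
    rw [hYinv_eq, Matrix.mul_apply, Fin.sum_univ_two]
    exact nadd (nmul1 (hdinv _ _) (hcint _ _)) (nmul1 (hdinv _ _) (hcint _ _))
  -- explicit formula for Ym⁻¹
  have hadj : Ym.adjugate = !![z, -y; -y, x] := by
    rw [Matrix.adjugate_fin_two]
    ext i j
    fin_cases i <;> fin_cases j <;> simp [hYm, Matrix.vecHead, Matrix.vecTail]
  have hYinv2 : Ym⁻¹ = (Ym.det)⁻¹ • !![z, -y; -y, x] := by
    rw [Matrix.inv_def, hadj, Ring.inverse_eq_inv']
  have hxb : ‖x‖ ≤ (p : ℝ)⁻¹ * ‖x * z - y ^ 2‖ := by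
    have e : x = Ym.det * Ym⁻¹ 1 1 := by
      rw [hYinv2]
      simp only [Matrix.smul_apply, smul_eq_mul, Matrix.cons_val', Matrix.cons_val_one,
        Matrix.head_cons, Matrix.head_fin_const, Matrix.empty_val', Matrix.cons_val_fin_one]
      field_simp
      simp
    rw [← hΔeq, e, norm_mul, mul_comm]
    exact mul_le_mul_of_nonneg_right (hYb 1 1) (norm_nonneg _)
  have hzb : ‖z‖ ≤ (p : ℝ)⁻¹ * ‖x * z - y ^ 2‖ := by
    have e : z = Ym.det * Ym⁻¹ 0 0 := by
      rw [hYinv2]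
      simp only [Matrix.smul_apply, smul_eq_mul, Matrix.cons_val', Matrix.cons_val_zero,
        Matrix.head_cons, Matrix.head_fin_const, Matrix.empty_val', Matrix.cons_val_fin_one]
      field_simp
      simp
    rw [← hΔeq, e, norm_mul, mul_comm]
    exact mul_le_mul_of_nonneg_right (hYb 0 0) (norm_nonneg _)
  have hyb : ‖y‖ ≤ (p : ℝ)⁻¹ * ‖x * z - y ^ 2‖ := by
    have e : y = -(Ym.det * Ym⁻¹ 0 1) := by
      rw [hYinv2]
      simp only [Matrix.smul_apply, smul_eq_mul, Matrix.cons_val', Matrix.cons_val_zero,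
        Matrix.cons_val_one, Matrix.head_cons, Matrix.head_fin_const, Matrix.empty_val',
        Matrix.cons_val_fin_one]
      field_simp
      simp
    rw [← hΔeq, e, norm_neg, norm_mul, mul_comm]
    exact mul_le_mul_of_nonneg_right (hYb 0 1) (norm_nonneg _)
  refine ⟨hΔ, hxb, hyb, hzb, ?_⟩
  -- the moreover part
  have hBc : B * c = -(A * a) := eq_neg_of_add_eq_zero_right h1
  have e1 : A * (a * Ym) = -(B * d) := by
    have hAa : A * a = -(B * c) := eq_neg_of_add_eq_zero_left h1
    rw [← Matrix.mul_assoc, hAa, Matrix.neg_mul, Matrix.mul_assoc, ← hd_eq]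
  have h5 : A * (b - a * Ym) = !![0, 1; 1, 0] := by
    rw [Matrix.mul_sub, e1, sub_neg_eq_add, h2]
  have hdetArel : A.det * (b - a * Ym).det = -1 := by
    have := congrArg Matrix.det h5
    rw [Matrix.det_mul, Matrix.det_fin_two_of] at this
    rw [this]; ring
  have hbaY : (b - a * Ym).det ≠ 0 := by
    intro h0; rw [h0, mul_zero] at hdetArel; norm_num at hdetArel
  set M : Matrix (Fin 2) (Fin 2) ℚ_[p] := b * Ym⁻¹ - a with hM
  have hMY : M * Ym = b - a * Ym := by
    rw [hM, Matrix.sub_mul, Matrix.mul_assoc, Matrix.nonsing_inv_mul Ym hYu, Matrix.mul_one]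
  have hdetM_rel : M.det * Ym.det = (b - a * Ym).det := by
    rw [← Matrix.det_mul, hMY]
  have hdetM0 : M.det ≠ 0 := by
    intro h0; rw [h0, zero_mul] at hdetM_rel; exact hbaY hdetM_rel.symm
  have hMu : IsUnit M.det := isUnit_iff_ne_zero.mpr hdetM0
  have hMYu : IsUnit (M * Ym).det := by
    rw [Matrix.det_mul]; exact (hMu.mul hYu)
  have hA_eq : A = !![0, 1; 1, 0] * Ym⁻¹ * M⁻¹ := by
    have h6 : A * (M * Ym) = !![0, 1; 1, 0] := by rw [hMY]; exact h5
    have h7 : A = !![0, 1; 1, 0] * (M * Ym)⁻¹ := by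
      rw [← h6, Matrix.mul_assoc]
      rw [Matrix.mul_nonsing_inv (M * Ym) hMYu, Matrix.mul_one]
    rw [h7, Matrix.mul_inv_rev, ← Matrix.mul_assoc]
  -- bounds on B' = b * Ym⁻¹ entries
  have hbY : ∀ i j, ‖(b * Ym⁻¹) i j‖ ≤ (p : ℝ)⁻¹ := by
    intro i j
    rw [Matrix.mul_apply, Fin.sum_univ_two]
    exact nadd (nmul1 (hbint _ _) (hYb _ _)) (nmul1 (hbint _ _) (hYb _ _))
  have hMint : ∀ i j, ‖M i j‖ ≤ 1 := by
    intro i j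
    rw [hM, Matrix.sub_apply]
    exact nsub (le_trans (hbY i j) (le_of_lt hpinv1)) (haint i j)
  have hM10 : ‖M 1 0‖ ≤ (p : ℝ)⁻¹ := by
    rw [hM, Matrix.sub_apply]
    exact nsub (hbY 1 0) ha10
  -- norm of det M
  have hsplitM : M.det = a.det + ((b * Ym⁻¹) 0 0 * (b * Ym⁻¹) 1 1 - (b * Ym⁻¹) 0 1 * (b * Ym⁻¹) 1 0
      - (b * Ym⁻¹) 0 0 * a 1 1 - a 0 0 * (b * Ym⁻¹) 1 1
      + (b * Ym⁻¹) 0 1 * a 1 0 + a 0 1 * (b * Ym⁻¹) 1 0) := by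
    rw [hM, Matrix.det_fin_two, Matrix.det_fin_two]
    simp only [Matrix.sub_apply]
    ring
  have hEb : ‖(b * Ym⁻¹) 0 0 * (b * Ym⁻¹) 1 1 - (b * Ym⁻¹) 0 1 * (b * Ym⁻¹) 1 0
      - (b * Ym⁻¹) 0 0 * a 1 1 - a 0 0 * (b * Ym⁻¹) 1 1
      + (b * Ym⁻¹) 0 1 * a 1 0 + a 0 1 * (b * Ym⁻¹) 1 0‖ ≤ (p : ℝ)⁻¹ := by
    refine nadd (nadd (nsub (nsub (nsub ?_ ?_) ?_) ?_) ?_) ?_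
    · exact nmul1 (le_trans (hbY 0 0) (le_of_lt hpinv1)) (hbY 1 1)
    · exact nmul1 (le_trans (hbY 0 1) (le_of_lt hpinv1)) (hbY 1 0)
    · exact nmul1' (hbY 0 0) (haint 1 1)
    · exact nmul1 (haint 0 0) (hbY 1 1)
    · exact nmul1' (hbY 0 1) (haint 1 0)
    · exact nmul1 (haint 0 1) (hbY 1 0)
  obtain ⟨E, hsplitM, hEb⟩ : ∃ E : ℚ_[p], M.det = a.det + E ∧ ‖E‖ ≤ (p : ℝ)⁻¹ :=
    ⟨_, hsplitM, hEb⟩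
  have hdetM_norm : ‖M.det‖ = 1 := by
    have hne : ‖a.det‖ ≠ ‖E‖ := by
      rw [hdeta]; intro hcon
      rw [← hcon] at hEb
      linarith
    rw [hsplitM, Padic.add_eq_max_of_ne hne, hdeta]
    exact max_eq_left (le_trans hEb (le_of_lt hpinv1))
  have hdetMinv : ‖(M.det)⁻¹‖ = 1 := by rw [norm_inv, hdetM_norm, inv_one]
  have hMi : M⁻¹ = (M.det)⁻¹ • !![M 1 1, -(M 0 1); -(M 1 0), M 0 0] := by
    rw [Matrix.inv_def, Matrix.adjugate_fin_two, Ring.inverse_eq_inv']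
  have k00 : M⁻¹ 0 0 = M.det⁻¹ * M 1 1 := by rw [hMi]; simp
  have k01 : M⁻¹ 0 1 = M.det⁻¹ * -(M 0 1) := by rw [hMi]; simp
  have k10 : M⁻¹ 1 0 = M.det⁻¹ * -(M 1 0) := by rw [hMi]; simp
  have k11 : M⁻¹ 1 1 = M.det⁻¹ * M 0 0 := by rw [hMi]; simp
  refine ⟨M⁻¹, ⟨?_, ?_, ?_⟩, hA_eq⟩
  · intro i j
    fin_cases i <;> fin_cases j
    · rw [show ((⟨0,by norm_num⟩ : Fin 2)) = 0 from rfl] at *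
      rw [k00]; exact nmul1 (le_of_eq hdetMinv) (hMint _ _)
    · rw [show ((⟨0,by norm_num⟩ : Fin 2)) = 0 from rfl, show ((⟨1,by norm_num⟩ : Fin 2)) = 1 from rfl]
      rw [k01, mul_neg, norm_neg]; exact nmul1 (le_of_eq hdetMinv) (hMint _ _)
    · rw [show ((⟨0,by norm_num⟩ : Fin 2)) = 0 from rfl, show ((⟨1,by norm_num⟩ : Fin 2)) = 1 from rfl]
      rw [k10, mul_neg, norm_neg]; exact nmul1 (le_of_eq hdetMinv) (hMint _ _)
    · rw [show ((⟨1,by norm_num⟩ : Fin 2)) = 1 from rfl]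
      rw [k11]; exact nmul1 (le_of_eq hdetMinv) (hMint _ _)
  · rw [Matrix.det_nonsing_inv, Ring.inverse_eq_inv', norm_inv, hdetM_norm, inv_one]
  · rw [k10, mul_neg, norm_neg]
    exact nmul1 (le_of_eq hdetMinv) hM10

private lemma nneg {p : ℕ} [Fact p.Prime] {u : ℚ_[p]} {c : ℝ} (hu : ‖u‖ ≤ c) : ‖-u‖ ≤ c := by
  rwa [norm_neg]

set_option maxHeartbeats 2000000 in
private lemma key (p : ℕ) [Fact p.Prime] (x y z : ℚ_[p]) (q γ : Matrix (Fin 4) (Fin 4) ℚ_[p])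
    (hq : q ∈ PS p) (hγ : γ ∈ Bp p)
    (h : s2 p * s1 p * s2 p * nS p x y z = q * γ) :
    (x * z - y ^ 2 ≠ 0) ∧
    ‖x‖ ≤ (p : ℝ)⁻¹ * ‖x * z - y ^ 2‖ ∧ ‖y‖ ≤ (p : ℝ)⁻¹ * ‖x * z - y ^ 2‖ ∧
    ‖z‖ ≤ (p : ℝ)⁻¹ * ‖x * z - y ^ 2‖ ∧
    ∃ γ' ∈ Gamma0 p, m2S p q = !![0, 1; 1, 0] * (!![x, y; y, z])⁻¹ * γ' := by
  obtain ⟨⟨hqdet, μq, hμq0, hqJ⟩, hq20, hq21, hq30, hq31⟩ := hq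
  obtain ⟨hint, ⟨μ, hμ1, hγJ⟩, h10, h20, h30, h21, h31, h23⟩ := hγ
  have hp1 : (1 : ℝ) < (p : ℝ) := by exact_mod_cast (Fact.out : p.Prime).one_lt
  have hpinv1 : (p : ℝ)⁻¹ < 1 := by rw [inv_lt_one_iff₀]; right; exact hp1
  rw [sigma_n] at h
  have hm : ∀ i j, (!![(0:ℚ_[p]),0,0,1; 0,0,1,0; 0,-1,-y,-z; -1,0,-x,-y]) i j
      = q i 0 * γ 0 j + q i 1 * γ 1 j + q i 2 * γ 2 j + q i 3 * γ 3 j := by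
    intro i j
    rw [h, Matrix.mul_apply, Fin.sum_univ_four]
  have E00 : (0:ℚ_[p]) = q 0 0 * γ 0 0 + q 0 1 * γ 1 0 + q 0 2 * γ 2 0 + q 0 3 * γ 3 0 := hm 0 0
  have E01 : (0:ℚ_[p]) = q 0 0 * γ 0 1 + q 0 1 * γ 1 1 + q 0 2 * γ 2 1 + q 0 3 * γ 3 1 := hm 0 1
  have E02 : (0:ℚ_[p]) = q 0 0 * γ 0 2 + q 0 1 * γ 1 2 + q 0 2 * γ 2 2 + q 0 3 * γ 3 2 := hm 0 2
  have E03 : (1:ℚ_[p]) = q 0 0 * γ 0 3 + q 0 1 * γ 1 3 + q 0 2 * γ 2 3 + q 0 3 * γ 3 3 := hm 0 3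
  have E10 : (0:ℚ_[p]) = q 1 0 * γ 0 0 + q 1 1 * γ 1 0 + q 1 2 * γ 2 0 + q 1 3 * γ 3 0 := hm 1 0
  have E11 : (0:ℚ_[p]) = q 1 0 * γ 0 1 + q 1 1 * γ 1 1 + q 1 2 * γ 2 1 + q 1 3 * γ 3 1 := hm 1 1
  have E12 : (1:ℚ_[p]) = q 1 0 * γ 0 2 + q 1 1 * γ 1 2 + q 1 2 * γ 2 2 + q 1 3 * γ 3 2 := hm 1 2
  have E13 : (0:ℚ_[p]) = q 1 0 * γ 0 3 + q 1 1 * γ 1 3 + q 1 2 * γ 2 3 + q 1 3 * γ 3 3 := hm 1 3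
  have E20 : (0:ℚ_[p]) = q 2 0 * γ 0 0 + q 2 1 * γ 1 0 + q 2 2 * γ 2 0 + q 2 3 * γ 3 0 := hm 2 0
  have E21 : (-1:ℚ_[p]) = q 2 0 * γ 0 1 + q 2 1 * γ 1 1 + q 2 2 * γ 2 1 + q 2 3 * γ 3 1 := hm 2 1
  have E22 : (-y:ℚ_[p]) = q 2 0 * γ 0 2 + q 2 1 * γ 1 2 + q 2 2 * γ 2 2 + q 2 3 * γ 3 2 := hm 2 2
  have E23 : (-z:ℚ_[p]) = q 2 0 * γ 0 3 + q 2 1 * γ 1 3 + q 2 2 * γ 2 3 + q 2 3 * γ 3 3 := hm 2 3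
  have E30 : (-1:ℚ_[p]) = q 3 0 * γ 0 0 + q 3 1 * γ 1 0 + q 3 2 * γ 2 0 + q 3 3 * γ 3 0 := hm 3 0
  have E31 : (0:ℚ_[p]) = q 3 0 * γ 0 1 + q 3 1 * γ 1 1 + q 3 2 * γ 2 1 + q 3 3 * γ 3 1 := hm 3 1
  have E32 : (-x:ℚ_[p]) = q 3 0 * γ 0 2 + q 3 1 * γ 1 2 + q 3 2 * γ 2 2 + q 3 3 * γ 3 2 := hm 3 2
  have E33 : (-y:ℚ_[p]) = q 3 0 * γ 0 3 + q 3 1 * γ 1 3 + q 3 2 * γ 2 3 + q 3 3 * γ 3 3 := hm 3 3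
  -- block equations
  have H1 : !![q 0 0, q 0 1; q 1 0, q 1 1] * !![γ 0 0, γ 0 1; γ 1 0, γ 1 1]
      + !![q 0 2, q 0 3; q 1 2, q 1 3] * !![γ 2 0, γ 2 1; γ 3 0, γ 3 1] = 0 := by
    rw [Matrix.mul_fin_two, Matrix.mul_fin_two]
    ext i j
    fin_cases i <;> fin_cases j
    · show q 0 0 * γ 0 0 + q 0 1 * γ 1 0 + (q 0 2 * γ 2 0 + q 0 3 * γ 3 0) = 0
      linear_combination -E00
    · show q 0 0 * γ 0 1 + q 0 1 * γ 1 1 + (q 0 2 * γ 2 1 + q 0 3 * γ 3 1) = 0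
      linear_combination -E01
    · show q 1 0 * γ 0 0 + q 1 1 * γ 1 0 + (q 1 2 * γ 2 0 + q 1 3 * γ 3 0) = 0
      linear_combination -E10
    · show q 1 0 * γ 0 1 + q 1 1 * γ 1 1 + (q 1 2 * γ 2 1 + q 1 3 * γ 3 1) = 0
      linear_combination -E11
  have H2 : !![q 0 0, q 0 1; q 1 0, q 1 1] * !![γ 0 2, γ 0 3; γ 1 2, γ 1 3]
      + !![q 0 2, q 0 3; q 1 2, q 1 3] * !![γ 2 2, γ 2 3; γ 3 2, γ 3 3] = !![0,1;1,0] := by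
    rw [Matrix.mul_fin_two, Matrix.mul_fin_two]
    ext i j
    fin_cases i <;> fin_cases j
    · show q 0 0 * γ 0 2 + q 0 1 * γ 1 2 + (q 0 2 * γ 2 2 + q 0 3 * γ 3 2) = 0
      linear_combination -E02
    · show q 0 0 * γ 0 3 + q 0 1 * γ 1 3 + (q 0 2 * γ 2 3 + q 0 3 * γ 3 3) = 1
      linear_combination -E03
    · show q 1 0 * γ 0 2 + q 1 1 * γ 1 2 + (q 1 2 * γ 2 2 + q 1 3 * γ 3 2) = 1
      linear_combination -E12
    · show q 1 0 * γ 0 3 + q 1 1 * γ 1 3 + (q 1 2 * γ 2 3 + q 1 3 * γ 3 3) = 0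
      linear_combination -E13
  have H3 : !![q 2 2, q 2 3; q 3 2, q 3 3] * !![γ 2 0, γ 2 1; γ 3 0, γ 3 1] = !![0,-1;-1,0] := by
    rw [Matrix.mul_fin_two]
    ext i j
    fin_cases i <;> fin_cases j
    · show q 2 2 * γ 2 0 + q 2 3 * γ 3 0 = 0
      linear_combination -E20 - γ 0 0 * hq20 - γ 1 0 * hq21
    · show q 2 2 * γ 2 1 + q 2 3 * γ 3 1 = -1
      linear_combination -E21 - γ 0 1 * hq20 - γ 1 1 * hq21
    · show q 3 2 * γ 2 0 + q 3 3 * γ 3 0 = -1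
      linear_combination -E30 - γ 0 0 * hq30 - γ 1 0 * hq31
    · show q 3 2 * γ 2 1 + q 3 3 * γ 3 1 = 0
      linear_combination -E31 - γ 0 1 * hq30 - γ 1 1 * hq31
  have H4 : !![q 2 2, q 2 3; q 3 2, q 3 3] * !![γ 2 2, γ 2 3; γ 3 2, γ 3 3] = !![-y,-z;-x,-y] := by
    rw [Matrix.mul_fin_two]
    ext i j
    fin_cases i <;> fin_cases j
    · show q 2 2 * γ 2 2 + q 2 3 * γ 3 2 = -y
      linear_combination -E22 - γ 0 2 * hq20 - γ 1 2 * hq21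
    · show q 2 2 * γ 2 3 + q 2 3 * γ 3 3 = -z
      linear_combination -E23 - γ 0 3 * hq20 - γ 1 3 * hq21
    · show q 3 2 * γ 2 2 + q 3 3 * γ 3 2 = -x
      linear_combination -E32 - γ 0 2 * hq30 - γ 1 2 * hq31
    · show q 3 2 * γ 2 3 + q 3 3 * γ 3 3 = -y
      linear_combination -E33 - γ 0 3 * hq30 - γ 1 3 * hq31
  -- norm of det γ
  have hdγ := congrArg Matrix.det hγJ
  rw [Matrix.det_mul, Matrix.det_mul, Matrix.det_transpose, detJ4, Matrix.det_smul, detJ4] at hdγ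
  simp only [mul_one, Fintype.card_fin] at hdγ
  have hnγ : ‖γ.det‖ * ‖γ.det‖ = 1 := by
    rw [← norm_mul, hdγ, norm_pow, hμ1, one_pow]
  have hγd1 : ‖γ.det‖ = 1 := by
    rcases mul_self_eq_one_iff.mp hnγ with h1 | h1
    · exact h1
    · exfalso; have := norm_nonneg γ.det; rw [h1] at this; linarith
  -- determinant splitting
  obtain ⟨E, hsplit, hEb⟩ : ∃ E : ℚ_[p],
      γ.det = (γ 0 0*γ 1 1 - γ 0 1*γ 1 0) * (γ 2 2*γ 3 3 - γ 2 3*γ 3 2) + E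
        ∧ ‖E‖ ≤ (p : ℝ)⁻¹ := by
    refine ⟨γ 2 0 * (γ 0 1*γ 1 2*γ 3 3 - γ 0 1*γ 1 3*γ 3 2 - γ 0 2*γ 1 1*γ 3 3
        + γ 0 2*γ 1 3*γ 3 1 + γ 0 3*γ 1 1*γ 3 2 - γ 0 3*γ 1 2*γ 3 1)
      + γ 2 1 * (-(γ 0 0*γ 1 2*γ 3 3) + γ 0 0*γ 1 3*γ 3 2 + γ 0 2*γ 1 0*γ 3 3
        - γ 0 2*γ 1 3*γ 3 0 - γ 0 3*γ 1 0*γ 3 2 + γ 0 3*γ 1 2*γ 3 0)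
      + γ 3 0 * (-(γ 0 1*γ 1 2*γ 2 3) + γ 0 1*γ 1 3*γ 2 2 + γ 0 2*γ 1 1*γ 2 3
        - γ 0 3*γ 1 1*γ 2 2)
      + γ 3 1 * (γ 0 0*γ 1 2*γ 2 3 - γ 0 0*γ 1 3*γ 2 2 - γ 0 2*γ 1 0*γ 2 3
        + γ 0 3*γ 1 0*γ 2 2), ?_, ?_⟩
    · rw [det4g]; ring
    · have t3 : ∀ u v w : ℚ_[p], ‖u * v * w‖ ≤ 1 → True := fun _ _ _ _ => trivial
      refine nadd (nadd (nadd (nmul1' h20 ?_) (nmul1' h21 ?_)) (nmul1' h30 ?_)) (nmul1' h31 ?_)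
      · exact nsub (nadd (nadd (nsub (nsub
          (nmul1 (nmul1 (hint _ _) (hint _ _)) (hint _ _))
          (nmul1 (nmul1 (hint _ _) (hint _ _)) (hint _ _)))
          (nmul1 (nmul1 (hint _ _) (hint _ _)) (hint _ _)))
          (nmul1 (nmul1 (hint _ _) (hint _ _)) (hint _ _)))
          (nmul1 (nmul1 (hint _ _) (hint _ _)) (hint _ _)))
          (nmul1 (nmul1 (hint _ _) (hint _ _)) (hint _ _))
      · exact nadd (nsub (nsub (nadd (nadd
          (nneg (nmul1 (nmul1 (hint _ _) (hint _ _)) (hint _ _)))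
          (nmul1 (nmul1 (hint _ _) (hint _ _)) (hint _ _)))
          (nmul1 (nmul1 (hint _ _) (hint _ _)) (hint _ _)))
          (nmul1 (nmul1 (hint _ _) (hint _ _)) (hint _ _)))
          (nmul1 (nmul1 (hint _ _) (hint _ _)) (hint _ _)))
          (nmul1 (nmul1 (hint _ _) (hint _ _)) (hint _ _))
      · exact nsub (nadd (nadd
          (nneg (nmul1 (nmul1 (hint _ _) (hint _ _)) (hint _ _)))
          (nmul1 (nmul1 (hint _ _) (hint _ _)) (hint _ _)))
          (nmul1 (nmul1 (hint _ _) (hint _ _)) (hint _ _)))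
          (nmul1 (nmul1 (hint _ _) (hint _ _)) (hint _ _))
      · exact nadd (nsub (nsub
          (nmul1 (nmul1 (hint _ _) (hint _ _)) (hint _ _))
          (nmul1 (nmul1 (hint _ _) (hint _ _)) (hint _ _)))
          (nmul1 (nmul1 (hint _ _) (hint _ _)) (hint _ _)))
          (nmul1 (nmul1 (hint _ _) (hint _ _)) (hint _ _))
  have hPn : ‖(γ 0 0*γ 1 1 - γ 0 1*γ 1 0) * (γ 2 2*γ 3 3 - γ 2 3*γ 3 2)‖ = 1 := by
    have hPE : (γ 0 0*γ 1 1 - γ 0 1*γ 1 0) * (γ 2 2*γ 3 3 - γ 2 3*γ 3 2) = γ.det + -E := by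
      rw [hsplit]; ring
    have hne : ‖γ.det‖ ≠ ‖-E‖ := by
      rw [hγd1, norm_neg]; intro hcon; rw [← hcon] at hEb; linarith
    rw [hPE, Padic.add_eq_max_of_ne hne, hγd1, norm_neg]
    exact max_eq_left (le_trans hEb (le_of_lt hpinv1))
  have hra : ‖γ 0 0*γ 1 1 - γ 0 1*γ 1 0‖ ≤ 1 :=
    nsub (nmul1 (hint _ _) (hint _ _)) (nmul1 (hint _ _) (hint _ _))
  have hrd : ‖γ 2 2*γ 3 3 - γ 2 3*γ 3 2‖ ≤ 1 :=
    nsub (nmul1 (hint _ _) (hint _ _)) (nmul1 (hint _ _) (hint _ _))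
  have hprod : ‖γ 0 0*γ 1 1 - γ 0 1*γ 1 0‖ * ‖γ 2 2*γ 3 3 - γ 2 3*γ 3 2‖ = 1 := by
    rw [← norm_mul]; exact hPn
  have hna : ‖γ 0 0*γ 1 1 - γ 0 1*γ 1 0‖ = 1 := by
    have h0a := norm_nonneg (γ 0 0*γ 1 1 - γ 0 1*γ 1 0)
    have h0d := norm_nonneg (γ 2 2*γ 3 3 - γ 2 3*γ 3 2)
    nlinarith
  have hnd : ‖γ 2 2*γ 3 3 - γ 2 3*γ 3 2‖ = 1 := by
    rw [hna, one_mul] at hprod; exact hprod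
  have hdeta' : ‖(!![γ 0 0, γ 0 1; γ 1 0, γ 1 1]).det‖ = 1 := by
    rw [Matrix.det_fin_two_of]; exact hna
  have hdetd' : ‖(!![γ 2 2, γ 2 3; γ 3 2, γ 3 3]).det‖ = 1 := by
    rw [Matrix.det_fin_two_of]; exact hnd
  -- apply the 2x2 block lemma
  have hb' : ∀ i j, ‖(!![γ 0 2, γ 0 3; γ 1 2, γ 1 3]) i j‖ ≤ 1 := by
    intro i j
    fin_cases i <;> fin_cases j
    · exact hint 0 2
    · exact hint 0 3
    · exact hint 1 2
    · exact hint 1 3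
  have hd' : ∀ i j, ‖(!![γ 2 2, γ 2 3; γ 3 2, γ 3 3]) i j‖ ≤ 1 := by
    intro i j
    fin_cases i <;> fin_cases j
    · exact hint 2 2
    · exact hint 2 3
    · exact hint 3 2
    · exact hint 3 3
  have hc' : ∀ i j, ‖(!![γ 2 0, γ 2 1; γ 3 0, γ 3 1]) i j‖ ≤ (p : ℝ)⁻¹ := by
    intro i j
    fin_cases i <;> fin_cases j
    · exact h20
    · exact h21
    · exact h30
    · exact h31
  have ha' : ∀ i j, ‖(!![γ 0 0, γ 0 1; γ 1 0, γ 1 1]) i j‖ ≤ 1 := by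
    intro i j
    fin_cases i <;> fin_cases j
    · exact hint 0 0
    · exact hint 0 1
    · exact hint 1 0
    · exact hint 1 1
  have ha10' : ‖(!![γ 0 0, γ 0 1; γ 1 0, γ 1 1]) 1 0‖ ≤ (p : ℝ)⁻¹ := h10
  obtain ⟨hΔ, hx', hy', hz', γ', hγ'G, hAeq⟩ :=
    twoblocks p x y z (!![q 0 0, q 0 1; q 1 0, q 1 1]) (!![q 0 2, q 0 3; q 1 2, q 1 3])
      (!![q 2 2, q 2 3; q 3 2, q 3 3]) (!![γ 0 0, γ 0 1; γ 1 0, γ 1 1])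
      (!![γ 0 2, γ 0 3; γ 1 2, γ 1 3]) (!![γ 2 0, γ 2 1; γ 3 0, γ 3 1])
      (!![γ 2 2, γ 2 3; γ 3 2, γ 3 3]) hb' hd' hc' ha10' ha' hdeta' hdetd' H1 H2 H3 H4
  exact ⟨hΔ, hx', hy', hz', γ', hγ'G, hAeq⟩

private lemma stmt9_aux (p : ℕ) [Fact p.Prime] (x y z : ℚ_[p]) (h0 : x * z - y ^ 2 = 0) :
    ¬ (Padic.addValuation (x * z - y ^ 2) <
      min (Padic.addValuation x) (min (Padic.addValuation y) (Padic.addValuation z))) := by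
  rw [h0, show Padic.addValuation (0:ℚ_[p]) = ⊤ from AddValuation.map_zero _]
  exact not_top_lt

/-- `σ·n ∈ P_S(ℚ_p)·B(p)` iff `min{v_p(x), v_p(y), v_p(z)} > v_p(xz−y²)`
(here `σ = s₂s₁s₂` and `n` is the unipotent matrix attached to `Y = [[x,y],[y,z]]`);
moreover in that case any factorization `σ·n = q·γ` with `q ∈ P_S(ℚ_p)`, `γ ∈ B(p)`
satisfies `m₂(q) ∈ [[0,1],[1,0]]·Y⁻¹·Γ₀(p)`. -/
theorem stmt_9 (p : ℕ) [Fact p.Prime] (x y z : ℚ_[p]) :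
    ((∃ q ∈ PS p, ∃ γ ∈ Bp p, s2 p * s1 p * s2 p * nS p x y z = q * γ) ↔
      Padic.addValuation (x * z - y ^ 2) <
        min (Padic.addValuation x) (min (Padic.addValuation y) (Padic.addValuation z))) ∧
    (∀ q γ : Matrix (Fin 4) (Fin 4) ℚ_[p], q ∈ PS p → γ ∈ Bp p →
      s2 p * s1 p * s2 p * nS p x y z = q * γ →
      ∃ γ' ∈ Gamma0 p, m2S p q = !![0, 1; 1, 0] * (!![x, y; y, z])⁻¹ * γ') := by
  constructor
  · constructor
    · rintro ⟨q, hq, γ, hγ, h⟩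
      obtain ⟨hΔ, hx', hy', hz', _⟩ := key p x y z q γ hq hγ h
      rw [lt_min_iff, lt_min_iff]
      exact ⟨(val_lt_iff p _ x hΔ).mpr hx', (val_lt_iff p _ y hΔ).mpr hy',
        (val_lt_iff p _ z hΔ).mpr hz'⟩
    · intro hv
      have hΔ : x * z - y ^ 2 ≠ 0 := fun h0 => stmt9_aux p x y z h0 hv
      rw [lt_min_iff, lt_min_iff] at hv
      obtain ⟨hvx, hvy, hvz⟩ := hv
      exact suffice p x y z hΔ ((val_lt_iff p _ x hΔ).mp hvx)
        ((val_lt_iff p _ y hΔ).mp hvy) ((val_lt_iff p _ z hΔ).mp hvz)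
  · intro q γ hq hγ h
    obtain ⟨_, _, _, _, g'⟩ := key p x y z q γ hq hγ h
    exact g'
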